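/- Let H be a real Hilbert space, V a closed subspace with orthogonal projection P : H → V, a, v ∈ H, and φ ∈ [0, π]. Define φ₁ = arccos √((cos²φ − cos²∠(v,V⊥))/(1 − cos²∠(v,V⊥))) when ∠(v,V⊥) ∈ (0, π/2] and φ ≤ ∠(v,V⊥) with (φ,∠(v,V⊥)) ≠ (0,0); φ₁ = 0 when φ = ∠(v,V⊥) = 0; and φ₁ = φ otherwise. Then for the cone with apex included but the rest of the boundary excluded: P[C°_H(a, v, φ)] = C°_V(Pa, Pv, φ₁) if φ ≤ ∠(v,V⊥), and P[C°_H(a, v, φ)] = V if φ > ∠(v,V⊥). -/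

import Mathlib

open scoped RealInnerProductSpace Classical

/-- The angle between a vector `v` and the orthogonal complement of `V`:
`∠(v,V⊥) = arccos (‖v - P v‖ / ‖v‖)` for `v ≠ 0` and `V ≠ H`, with the conventions
`∠(v,V⊥) = π` when `v = 0` or `V = H` (and it gives `0` when `V = {0}`, `v ≠ 0`). -/
noncomputable def angleToPerp {H : Type*} [NormedAddCommGroup H] [InnerProductSpace ℝ H]
    [CompleteSpace H] (V : Submodule ℝ H) [CompleteSpace V] (v : H) : ℝ :=
  if v = 0 ∨ V = ⊤ then Real.pi
  else Real.arccos (‖v - (Submodule.orthogonalProjectionOnto V v : H)‖ / ‖v‖)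

private lemma aux_fwd (A B c W IV IP : ℝ) (hA : 0 ≤ A) (hB : 0 ≤ B) (hW : 0 ≤ W)
    (hcW : W ≤ c) (hIP : IP ≤ B * W)
    (h : c * Real.sqrt (A ^ 2 + B ^ 2) < IV + IP) :
    A * Real.sqrt (c ^ 2 - W ^ 2) < IV := by
  set S := Real.sqrt (A ^ 2 + B ^ 2) with hS
  set D := Real.sqrt (c ^ 2 - W ^ 2) with hD
  have hc0 : 0 ≤ c := le_trans hW hcW
  have hS0 : 0 ≤ S := Real.sqrt_nonneg _
  have hD0 : 0 ≤ D := Real.sqrt_nonneg _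
  have hS2 : S ^ 2 = A ^ 2 + B ^ 2 := Real.sq_sqrt (by positivity)
  have hD2 : D ^ 2 = c ^ 2 - W ^ 2 := Real.sq_sqrt (by nlinarith)
  have hkey : A * D + B * W ≤ c * S := by
    have h1 : (A * D + B * W) ^ 2 ≤ (c * S) ^ 2 := by
      nlinarith [sq_nonneg (A * W - B * D)]
    have h2 : 0 ≤ A * D + B * W := by positivity
    have h3 : 0 ≤ c * S := mul_nonneg hc0 hS0
    nlinarith
  linarith

private lemma aux_bwd (r c W IV : ℝ) (hr : 0 ≤ r) (hW : 0 ≤ W) (hcW : W ≤ c)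
    (h : r * Real.sqrt (c ^ 2 - W ^ 2) < IV) :
    ∃ t : ℝ, 0 ≤ t ∧ c * Real.sqrt (r ^ 2 + t ^ 2) < IV + t * W := by
  set D := Real.sqrt (c ^ 2 - W ^ 2) with hD
  have hD0 : 0 ≤ D := Real.sqrt_nonneg _
  have hD2 : D ^ 2 = c ^ 2 - W ^ 2 := Real.sq_sqrt (by nlinarith)
  rcases eq_or_lt_of_le hD0 with hD0' | hDpos
  · -- D = 0, so c = W
    have hcW' : c = W := by nlinarith
    have hIV : 0 < IV := by nlinarith
    rcases eq_or_lt_of_le hW with hW0 | hWpos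
    · refine ⟨0, le_rfl, ?_⟩
      have hc0 : c = 0 := by rw [hcW', ← hW0]
      rw [hc0]
      simpa using hIV
    · refine ⟨max 1 (W * r ^ 2 / IV), le_trans zero_le_one (le_max_left _ _), ?_⟩
      set t := max 1 (W * r ^ 2 / IV) with ht
      have ht1 : (1:ℝ) ≤ t := le_max_left _ _
      have ht0 : 0 < t := lt_of_lt_of_le one_pos ht1
      have ht2 : W * r ^ 2 / IV ≤ t := le_max_right _ _
      have hs : Real.sqrt (r ^ 2 + t ^ 2) ≤ t + r ^ 2 / (2 * t) := by
        rw [show t + r ^ 2 / (2 * t) = Real.sqrt ((t + r ^ 2 / (2 * t)) ^ 2) from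
          (Real.sqrt_sq (by positivity)).symm]
        apply Real.sqrt_le_sqrt
        have hexp : (t + r ^ 2 / (2 * t)) ^ 2 = t ^ 2 + r ^ 2 + (r ^ 2 / (2 * t)) ^ 2 := by
          field_simp
          ring
        nlinarith [sq_nonneg (r ^ 2 / (2 * t))]
      have h2 : W * (r ^ 2 / (2 * t)) < IV := by
        have h3 : W * r ^ 2 ≤ t * IV := by
          rw [div_le_iff₀ hIV] at ht2; linarith
        rw [show W * (r ^ 2 / (2 * t)) = (W * r ^ 2) / (2 * t) from by ring,
          div_lt_iff₀ (by positivity)]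
        nlinarith
      calc c * Real.sqrt (r ^ 2 + t ^ 2) ≤ W * (t + r ^ 2 / (2 * t)) := by
              rw [hcW']; exact mul_le_mul_of_nonneg_left hs hW
        _ = t * W + W * (r ^ 2 / (2 * t)) := by ring
        _ < IV + t * W := by linarith
  · -- D > 0
    refine ⟨r * W / D, by positivity, ?_⟩
    have hc0 : 0 ≤ c := le_trans hW hcW
    have hsq : Real.sqrt (r ^ 2 + (r * W / D) ^ 2) = r * c / D := by
      rw [show r ^ 2 + (r * W / D) ^ 2 = (r * c / D) ^ 2 by
        field_simp
        nlinarith]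
      exact Real.sqrt_sq (by positivity)
    rw [hsq]
    have heq : c * (r * c / D) = r * D + (r * W / D) * W := by
      field_simp
      nlinarith
    rw [heq]
    linarith

private lemma aux_bwd2 (r c W IV : ℝ) (hr : 0 ≤ r) (hW : 0 ≤ W) (hc : c < W) :
    ∃ t : ℝ, 0 ≤ t ∧ c * Real.sqrt (r ^ 2 + t ^ 2) < IV + t * W := by
  by_cases hc0 : 0 ≤ c
  · have hWpos : 0 < W := lt_of_le_of_lt hc0 hc
    have hWc : 0 < W - c := by linarith
    refine ⟨(c * r + |IV| + 1) / (W - c), div_nonneg (by positivity) hWc.le, ?_⟩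
    set t := (c * r + |IV| + 1) / (W - c) with ht
    have ht0 : 0 ≤ t := div_nonneg (by positivity) hWc.le
    have hteq : t * (W - c) = c * r + |IV| + 1 := by
      rw [ht, div_mul_cancel₀ _ (ne_of_gt hWc)]
    have hs : Real.sqrt (r ^ 2 + t ^ 2) ≤ r + t := by
      rw [show r + t = Real.sqrt ((r + t) ^ 2) from (Real.sqrt_sq (by positivity)).symm]
      apply Real.sqrt_le_sqrt
      nlinarith
    have habs : -IV ≤ |IV| := neg_le_abs IV
    calc c * Real.sqrt (r ^ 2 + t ^ 2) ≤ c * (r + t) := mul_le_mul_of_nonneg_left hs hc0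
      _ < IV + t * W := by nlinarith
  · push_neg at hc0
    have hnc : 0 < -c := by linarith
    refine ⟨(|IV| + 1) / (-c), div_nonneg (by positivity) hnc.le, ?_⟩
    set t := (|IV| + 1) / (-c) with ht
    have ht0 : 0 ≤ t := div_nonneg (by positivity) hnc.le
    have hteq : t * (-c) = |IV| + 1 := by
      rw [ht, div_mul_cancel₀ _ (ne_of_gt hnc)]
    have hs : t ≤ Real.sqrt (r ^ 2 + t ^ 2) :=
      (Real.le_sqrt ht0 (by positivity)).mpr (by nlinarith)
    have habs : -IV ≤ |IV| := neg_le_abs IV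
    calc c * Real.sqrt (r ^ 2 + t ^ 2) ≤ c * t := by
          rw [mul_comm c t, mul_comm c (Real.sqrt _)]
          exact mul_le_mul_of_nonpos_right hs hc0.le
      _ < IV + t * W := by nlinarith [mul_nonneg ht0 hW]

set_option maxHeartbeats 2000000 in
/-- Projection of the cone `C°_H(a,v,φ)` with the apex included but the
rest of the boundary excluded: with `φ₁ = arccos √((cos²φ - cos²∠(v,V⊥))/(1 - cos²∠(v,V⊥)))`
when `∠(v,V⊥) ∈ (0, π/2]` and `φ ≤ ∠(v,V⊥)` (with `(φ, ∠(v,V⊥)) ≠ (0,0)`), `φ₁ = 0` when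
`φ = ∠(v,V⊥) = 0`, and `φ₁ = φ` otherwise, one has
`P[C°_H(a,v,φ)] = C°_V(P a, P v, φ₁)` if `φ ≤ ∠(v,V⊥)`, and `P[C°_H(a,v,φ)] = V` if
`φ > ∠(v,V⊥)`. -/
theorem stmt13 {H : Type*} [NormedAddCommGroup H] [InnerProductSpace ℝ H] [CompleteSpace H]
    (V : Submodule ℝ H) [CompleteSpace V]
    (a v : H) (φ : ℝ) (hφ0 : 0 ≤ φ) (hφπ : φ ≤ Real.pi)
    (φ₁ : ℝ)
    (hφ₁ : φ₁ =
      if 0 < angleToPerp V v ∧ angleToPerp V v ≤ Real.pi / 2 ∧ φ ≤ angleToPerp V v ∧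
          ¬(φ = 0 ∧ angleToPerp V v = 0) then
        Real.arccos (Real.sqrt ((Real.cos φ ^ 2 - Real.cos (angleToPerp V v) ^ 2) /
          (1 - Real.cos (angleToPerp V v) ^ 2)))
      else if φ = 0 ∧ angleToPerp V v = 0 then 0
      else φ) :
    (φ ≤ angleToPerp V v →
      (fun u : H => (Submodule.orthogonalProjectionOnto V u : H)) ''
          ({a} ∪ {u : H | ⟪u - a, v⟫ > Real.cos φ * (‖u - a‖ * ‖v‖)}) =
        {(Submodule.orthogonalProjectionOnto V a : H)} ∪
          {y : H | y ∈ V ∧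
            ⟪y - (Submodule.orthogonalProjectionOnto V a : H), (Submodule.orthogonalProjectionOnto V v : H)⟫ >
              Real.cos φ₁ * (‖y - (Submodule.orthogonalProjectionOnto V a : H)‖ *
                ‖(Submodule.orthogonalProjectionOnto V v : H)‖)}) ∧
    (angleToPerp V v < φ →
      (fun u : H => (Submodule.orthogonalProjectionOnto V u : H)) ''
          ({a} ∪ {u : H | ⟪u - a, v⟫ > Real.cos φ * (‖u - a‖ * ‖v‖)}) = (V : Set H)) := by
  by_cases htriv : v = 0 ∨ V = ⊤
  · -- trivial case: angle is π
    have hθ : angleToPerp V v = Real.pi := by rw [angleToPerp, if_pos htriv]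
    constructor
    · intro _
      have hφ₁' : φ₁ = φ := by
        rw [hφ₁, if_neg, if_neg]
        · rintro ⟨_, h0⟩; rw [hθ] at h0; exact Real.pi_ne_zero h0
        · rintro ⟨_, h2, _⟩; rw [hθ] at h2; linarith [Real.pi_pos]
      rw [hφ₁']
      rcases htriv with hv | hV
      · subst hv
        ext y
        simp only [Set.mem_image, Set.mem_union, Set.mem_singleton_iff, Set.mem_setOf_eq,
          inner_zero_right, norm_zero, mul_zero, map_zero, ZeroMemClass.coe_zero,
          lt_self_iff_false, and_false, or_false]
        constructor
        · rintro ⟨u, rfl, rfl⟩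
          rfl
        · rintro rfl
          exact ⟨a, rfl, rfl⟩
      · subst hV
        have hid : ∀ u : H, ((Submodule.orthogonalProjectionOnto (⊤ : Submodule ℝ H) u : H)) = u :=
          fun u => Submodule.starProjection_eq_self_iff.mpr trivial
        rw [show (fun u : H => ((Submodule.orthogonalProjectionOnto (⊤ : Submodule ℝ H) u : H))) = id from
          funext fun u => hid u, Set.image_id]
        ext y
        simp [hid]
    · intro hlt
      rw [hθ] at hlt
      linarith
  · -- nontrivial case
    have htriv' := htriv
    push_neg at htriv'
    obtain ⟨hv0, hV⟩ := htriv'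
    have hvpos : (0:ℝ) < ‖v‖ := norm_pos_iff.mpr hv0
    set p : H := (Submodule.orthogonalProjectionOnto V v : H) with hp
    set w : H := v - p with hw
    have hpV : p ∈ V := SetLike.coe_mem _
    have hwperp : w ∈ Vᗮ := Submodule.sub_starProjection_mem_orthogonal v
    have hvpw : v = p + w := by rw [hw]; abel
    have hPmem : ∀ x : H, (Submodule.orthogonalProjectionOnto V x : H) ∈ V := fun x => SetLike.coe_mem _
    have hperp : ∀ x : H, x - (Submodule.orthogonalProjectionOnto V x : H) ∈ Vᗮ :=
      Submodule.sub_starProjection_mem_orthogonal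
    have hWle : ‖w‖ ≤ ‖v‖ := by
      have h1 : ⟪p, w⟫ = 0 := Submodule.inner_right_of_mem_orthogonal hpV hwperp
      have h2 : ‖v‖ ^ 2 = ‖p‖ ^ 2 + ‖w‖ ^ 2 := by
        rw [hvpw, norm_add_sq_real, h1]; ring
      nlinarith [norm_nonneg p, norm_nonneg w, norm_nonneg v]
    have hvsq : ‖v‖ ^ 2 = ‖p‖ ^ 2 + ‖w‖ ^ 2 := by
      have h1 : ⟪p, w⟫ = 0 := Submodule.inner_right_of_mem_orthogonal hpV hwperp
      rw [hvpw, norm_add_sq_real, h1]; ring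
    have hθ : angleToPerp V v = Real.arccos (‖w‖ / ‖v‖) := by
      rw [angleToPerp, if_neg htriv]
    have hratio0 : 0 ≤ ‖w‖ / ‖v‖ := by positivity
    have hratio1 : ‖w‖ / ‖v‖ ≤ 1 := (div_le_one hvpos).mpr hWle
    have hcosθ : Real.cos (angleToPerp V v) = ‖w‖ / ‖v‖ := by
      rw [hθ]; exact Real.cos_arccos (by linarith) hratio1
    have hθ0 : 0 ≤ angleToPerp V v := by rw [hθ]; exact Real.arccos_nonneg _
    have hθπ : angleToPerp V v ≤ Real.pi := by rw [hθ]; exact Real.arccos_le_pi _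
    have hθhalf : angleToPerp V v ≤ Real.pi / 2 := by
      rw [hθ]; exact Real.arccos_le_pi_div_two.mpr hratio0
    -- decomposition lemmas
    have hinner : ∀ x : H, ⟪x, v⟫ =
        ⟪(Submodule.orthogonalProjectionOnto V x : H), p⟫ + ⟪x - (Submodule.orthogonalProjectionOnto V x : H), w⟫ := by
      intro x
      have e1 : ⟪x - (Submodule.orthogonalProjectionOnto V x : H), p⟫ = 0 :=
        Submodule.inner_left_of_mem_orthogonal hpV (hperp x)
      have e2 : ⟪(Submodule.orthogonalProjectionOnto V x : H), w⟫ = 0 :=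
        Submodule.inner_right_of_mem_orthogonal (hPmem x) hwperp
      have e3 : x = (Submodule.orthogonalProjectionOnto V x : H) + (x - (Submodule.orthogonalProjectionOnto V x : H)) := by
        abel
      calc ⟪x, v⟫ = ⟪(Submodule.orthogonalProjectionOnto V x : H) + (x - (Submodule.orthogonalProjectionOnto V x : H)),
            p + w⟫ := by rw [← e3, ← hvpw]
        _ = _ := by
            rw [inner_add_left, inner_add_right, inner_add_right, e1, e2]
            ring
    have hnormsq : ∀ x : H, ‖x‖ ^ 2 =
        ‖(Submodule.orthogonalProjectionOnto V x : H)‖ ^ 2 + ‖x - (Submodule.orthogonalProjectionOnto V x : H)‖ ^ 2 := by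
      intro x
      have e1 : ⟪(Submodule.orthogonalProjectionOnto V x : H), x - (Submodule.orthogonalProjectionOnto V x : H)⟫ = 0 :=
        Submodule.inner_right_of_mem_orthogonal (hPmem x) (hperp x)
      have e3 : x = (Submodule.orthogonalProjectionOnto V x : H) + (x - (Submodule.orthogonalProjectionOnto V x : H)) := by
        abel
      nth_rewrite 1 [e3]
      rw [norm_add_sq_real, e1]; ring
    have hnorm : ∀ x : H, ‖x‖ = Real.sqrt
        (‖(Submodule.orthogonalProjectionOnto V x : H)‖ ^ 2 + ‖x - (Submodule.orthogonalProjectionOnto V x : H)‖ ^ 2) := by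
      intro x
      rw [← hnormsq, Real.sqrt_sq (norm_nonneg x)]
    -- unit vector e in Vᗮ with ⟪e,v⟫ = ‖w‖
    obtain ⟨e, heperp, henorm, heinner⟩ :
        ∃ e : H, e ∈ Vᗮ ∧ ‖e‖ = 1 ∧ ⟪e, v⟫ = ‖w‖ := by
      by_cases hw0 : w = 0
      · have hbot : Vᗮ ≠ ⊥ := fun hbot => hV (Submodule.orthogonal_eq_bot_iff.mp hbot)
        obtain ⟨e0, he0mem, he0⟩ := Submodule.exists_mem_ne_zero_of_ne_bot hbot
        have he0n : (0:ℝ) < ‖e0‖ := norm_pos_iff.mpr he0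
        refine ⟨‖e0‖⁻¹ • e0, Submodule.smul_mem _ _ he0mem, ?_, ?_⟩
        · rw [norm_smul, norm_inv, norm_norm, inv_mul_cancel₀ (ne_of_gt he0n)]
        · rw [hw0, norm_zero, real_inner_smul_left]
          have : ⟪e0, v⟫ = 0 := by
            rw [hvpw, hw0, add_zero]
            exact Submodule.inner_left_of_mem_orthogonal hpV he0mem
          rw [this, mul_zero]
      · have hwn : (0:ℝ) < ‖w‖ := norm_pos_iff.mpr hw0
        refine ⟨‖w‖⁻¹ • w, Submodule.smul_mem _ _ hwperp, ?_, ?_⟩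
        · rw [norm_smul, norm_inv, norm_norm, inv_mul_cancel₀ (ne_of_gt hwn)]
        · rw [real_inner_smul_left, hvpw, inner_add_right,
            Submodule.inner_left_of_mem_orthogonal hpV hwperp, real_inner_self_eq_norm_sq]
          field_simp
          ring
    -- candidate point computation
    have hcand : ∀ (xV : H), xV ∈ V → ∀ t : ℝ, 0 ≤ t →
        (Submodule.orthogonalProjectionOnto V (a + xV + t • e) : H) = (Submodule.orthogonalProjectionOnto V a : H) + xV ∧
        ⟪(a + xV + t • e) - a, v⟫ = ⟪xV, p⟫ + t * ‖w‖ ∧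
        ‖(a + xV + t • e) - a‖ = Real.sqrt (‖xV‖ ^ 2 + t ^ 2) := by
      intro xV hxV t ht
      have hte : t • e ∈ Vᗮ := Submodule.smul_mem _ _ heperp
      have hxe : ⟪xV, t • e⟫ = 0 := Submodule.inner_right_of_mem_orthogonal hxV hte
      have hdiff : (a + xV + t • e) - a = xV + t • e := by abel
      refine ⟨?_, ?_, ?_⟩
      · have : (Submodule.orthogonalProjectionOnto V (a + xV + t • e) : H) =
            (Submodule.orthogonalProjectionOnto V a : H) + (Submodule.orthogonalProjectionOnto V xV : H) +
            (Submodule.orthogonalProjectionOnto V (t • e) : H) := by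
          rw [map_add, map_add]; push_cast; ring
        rw [this, show ((Submodule.orthogonalProjectionOnto V xV : H)) = xV from Submodule.starProjection_eq_self_iff.mpr hxV,
          Submodule.orthogonalProjectionOnto_apply_of_mem_orthogonal hte]
        simp
      · rw [hdiff, inner_add_left, real_inner_smul_left, heinner]
        congr 1
        have hxw : ⟪xV, w⟫ = 0 := Submodule.inner_right_of_mem_orthogonal hxV hwperp
        rw [hvpw, inner_add_right, hxw, add_zero]
      · rw [hdiff]
        have h2 : ‖xV + t • e‖ ^ 2 = ‖xV‖ ^ 2 + t ^ 2 := by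
          rw [norm_add_sq_real, hxe, norm_smul, henorm]
          simp [abs_of_nonneg ht]
        rw [← h2, Real.sqrt_sq (norm_nonneg _)]
    constructor
    · -- part 1 : φ ≤ θ
      intro hle
      by_cases hp0 : p = 0
      · -- θ = 0, so φ = 0
        have hwv : ‖w‖ = ‖v‖ := by
          have hpn : ‖p‖ = 0 := by rw [hp0, norm_zero]
          nlinarith [norm_nonneg w, norm_nonneg v]
        have hθeq : angleToPerp V v = 0 := by
          rw [hθ, Real.arccos_eq_zero, hwv, div_self (ne_of_gt hvpos)]
        have hφeq : φ = 0 := le_antisymm (by rw [← hθeq]; exact hle) hφ0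
        have hempty : ∀ u : H, ¬(⟪u - a, v⟫ > Real.cos φ * (‖u - a‖ * ‖v‖)) := by
          intro u hu
          rw [hφeq, Real.cos_zero, one_mul] at hu
          exact absurd (real_inner_le_norm (u - a) v) (not_le.mpr hu)
        ext y
        simp only [Set.mem_image, Set.mem_union, Set.mem_singleton_iff, Set.mem_setOf_eq,
          hp0, inner_zero_right, norm_zero, mul_zero, lt_self_iff_false, and_false, or_false]
        constructor
        · rintro ⟨u, hu | hu, rfl⟩
          · rw [hu]
          · exact absurd hu (hempty u)
        · rintro rfl
          exact ⟨a, Or.inl rfl, rfl⟩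
      · -- θ > 0
        have hppos : (0:ℝ) < ‖p‖ := norm_pos_iff.mpr hp0
        have hWlt : ‖w‖ < ‖v‖ := by nlinarith [norm_nonneg w, norm_nonneg v]
        have hθpos : 0 < angleToPerp V v := by
          rw [hθ]; exact Real.arccos_pos.mpr ((div_lt_one hvpos).mpr hWlt)
        have hφ₁val : φ₁ = Real.arccos (Real.sqrt ((Real.cos φ ^ 2 -
            Real.cos (angleToPerp V v) ^ 2) / (1 - Real.cos (angleToPerp V v) ^ 2))) := by
          rw [hφ₁, if_pos ⟨hθpos, hθhalf, hle, fun h => absurd h.2 (ne_of_gt hθpos)⟩]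
        set c := Real.cos φ * ‖v‖ with hc
        set W := ‖w‖ with hWdef
        have hcosle : Real.cos (angleToPerp V v) ≤ Real.cos φ :=
          Real.cos_le_cos_of_nonneg_of_le_pi hφ0 hθπ hle
        have hWc : W ≤ c := by
          rw [hcosθ] at hcosle
          calc W = W / ‖v‖ * ‖v‖ := by field_simp
            _ ≤ Real.cos φ * ‖v‖ := mul_le_mul_of_nonneg_right hcosle hvpos.le
        have hW0 : (0:ℝ) ≤ W := norm_nonneg w
        have hc0 : (0:ℝ) ≤ c := le_trans hW0 hWc
        set D := Real.sqrt (c ^ 2 - W ^ 2) with hD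
        have hD0 : 0 ≤ D := Real.sqrt_nonneg _
        have hD2 : D ^ 2 = c ^ 2 - W ^ 2 :=
          Real.sq_sqrt (sub_nonneg.mpr (pow_le_pow_left₀ hW0 hWc 2))
        have hpsq : ‖p‖ ^ 2 = ‖v‖ ^ 2 - W ^ 2 := by linarith [hvsq]
        have harg : (Real.cos φ ^ 2 - Real.cos (angleToPerp V v) ^ 2) /
            (1 - Real.cos (angleToPerp V v) ^ 2) = (c ^ 2 - W ^ 2) / ‖p‖ ^ 2 := by
          rw [hcosθ]
          have hq1 : (W / ‖v‖) ^ 2 < 1 := by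
            rw [div_pow, div_lt_one (pow_pos hvpos 2)]
            exact pow_lt_pow_left₀ hWlt hW0 (by norm_num)
          rw [div_eq_div_iff (ne_of_gt (by linarith : (0:ℝ) < 1 - (W / ‖v‖) ^ 2))
            (ne_of_gt (pow_pos hppos 2))]
          rw [hc, hpsq]
          field_simp
        have hsq1 : Real.sqrt ((c ^ 2 - W ^ 2) / ‖p‖ ^ 2) = D / ‖p‖ := by
          rw [Real.sqrt_div (sub_nonneg.mpr (pow_le_pow_left₀ hW0 hWc 2)), Real.sqrt_sq (norm_nonneg p)]
        have hDle : D ≤ ‖p‖ := by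
          have hcv : c ^ 2 ≤ ‖v‖ ^ 2 := by
            rw [hc, mul_pow]
            nlinarith [Real.cos_sq_le_one φ, sq_nonneg ‖v‖]
          nlinarith [hD0, hD2, hpsq, hppos]
        have hcosφ₁ : Real.cos φ₁ = D / ‖p‖ := by
          rw [hφ₁val, harg, hsq1]
          exact Real.cos_arccos
            (le_trans (by norm_num) (div_nonneg hD0 (norm_nonneg p)))
            ((div_le_one hppos).mpr hDle)
        have hDp : Real.cos φ₁ * ‖p‖ = D := by
          rw [hcosφ₁]; field_simp
        ext y
        simp only [Set.mem_image, Set.mem_union, Set.mem_singleton_iff, Set.mem_setOf_eq]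
        constructor
        · rintro ⟨u, hu | hu, rfl⟩
          · left; rw [hu]
          · right
            refine ⟨hPmem u, ?_⟩
            have hPsub : (Submodule.orthogonalProjectionOnto V u : H) - (Submodule.orthogonalProjectionOnto V a : H) =
                (Submodule.orthogonalProjectionOnto V (u - a) : H) := by
              rw [map_sub]; push_cast; ring
            rw [hPsub]
            set x := u - a with hx
            set A := ‖(Submodule.orthogonalProjectionOnto V x : H)‖ with hA
            set B := ‖x - (Submodule.orthogonalProjectionOnto V x : H)‖ with hB
            have hkey : A * D < ⟪(Submodule.orthogonalProjectionOnto V x : H), p⟫ := by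
              rw [hD]
              apply aux_fwd A B c W _ ⟪x - (Submodule.orthogonalProjectionOnto V x : H), w⟫ (norm_nonneg _)
                (norm_nonneg _) hW0 hWc (real_inner_le_norm _ _)
              rw [← hinner x]
              calc c * Real.sqrt (A ^ 2 + B ^ 2)
                  = Real.cos φ * (Real.sqrt (A ^ 2 + B ^ 2) * ‖v‖) := by rw [hc]; ring
                _ = Real.cos φ * (‖x‖ * ‖v‖) := by rw [← hnorm x]
                _ < ⟪x, v⟫ := hu
            calc Real.cos φ₁ * (A * ‖p‖) = A * (Real.cos φ₁ * ‖p‖) := by ring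
              _ = A * D := by rw [hDp]
              _ < _ := hkey
        · rintro (rfl | ⟨hyV, hy⟩)
          · exact ⟨a, Or.inl rfl, rfl⟩
          · set xV := y - (Submodule.orthogonalProjectionOnto V a : H) with hxV
            have hxVmem : xV ∈ V := Submodule.sub_mem V hyV (hPmem a)
            have hiv : ‖xV‖ * Real.sqrt (c ^ 2 - W ^ 2) < ⟪xV, p⟫ := by
              rw [← hD]
              calc ‖xV‖ * D = Real.cos φ₁ * (‖xV‖ * ‖p‖) := by rw [← hDp]; ring
                _ < ⟪xV, p⟫ := hy
            obtain ⟨t, ht0, hineq⟩ := aux_bwd ‖xV‖ c W ⟪xV, p⟫ (norm_nonneg _) hW0 hWc hiv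
            obtain ⟨hcP, hcI, hcN⟩ := hcand xV hxVmem t ht0
            refine ⟨a + xV + t • e, Or.inr ?_, ?_⟩
            · show ⟪(a + xV + t • e) - a, v⟫ > _
              rw [hcI, hcN]
              calc Real.cos φ * (Real.sqrt (‖xV‖ ^ 2 + t ^ 2) * ‖v‖)
                  = c * Real.sqrt (‖xV‖ ^ 2 + t ^ 2) := by rw [hc]; ring
                _ < ⟪xV, p⟫ + t * W := hineq
            · rw [hcP, hxV]; abel
    · -- part 2 : θ < φ
      intro hlt
      have hcoslt : Real.cos φ < ‖w‖ / ‖v‖ := by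
        rw [← hcosθ]
        exact Real.cos_lt_cos_of_nonneg_of_le_pi hθ0 hφπ hlt
      have hcW : Real.cos φ * ‖v‖ < ‖w‖ := by
        rw [lt_div_iff₀ hvpos] at hcoslt
        linarith
      ext y
      simp only [Set.mem_image, Set.mem_union, Set.mem_singleton_iff, Set.mem_setOf_eq,
        SetLike.mem_coe]
      constructor
      · rintro ⟨u, _, rfl⟩
        exact hPmem u
      · intro hy
        set xV := y - (Submodule.orthogonalProjectionOnto V a : H) with hxV
        have hxVmem : xV ∈ V := Submodule.sub_mem V hy (hPmem a)
        obtain ⟨t, ht0, hineq⟩ := aux_bwd2 ‖xV‖ (Real.cos φ * ‖v‖) ‖w‖ ⟪xV, p⟫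
          (norm_nonneg _) (norm_nonneg _) hcW
        obtain ⟨hcP, hcI, hcN⟩ := hcand xV hxVmem t ht0
        refine ⟨a + xV + t • e, Or.inr ?_, ?_⟩
        · show ⟪(a + xV + t • e) - a, v⟫ > _
          rw [hcI, hcN]
          calc Real.cos φ * (Real.sqrt (‖xV‖ ^ 2 + t ^ 2) * ‖v‖)
              = Real.cos φ * ‖v‖ * Real.sqrt (‖xV‖ ^ 2 + t ^ 2) := by ring
            _ < ⟪xV, p⟫ + t * ‖w‖ := hineq
        · rw [hcP, hxV]; abel
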